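/- With the setup of the appendix (r ∈ (0,1), Ω_L, Ω_R, u_L, u_R, R_L, R_R as defined there), for any φ ∈ ℝ: u_Rᵀ·R_L(π+φ)·Ω_R·u_L = -4 r² (1-r²) sin φ. -/

import Mathlib

open Matrix Real NormedSpace

attribute [local instance] Matrix.linftyOpNormedAddCommGroup Matrix.linftyOpNormedRing
  Matrix.linftyOpNormedAlgebra

lemma rodrigues (Ω : Matrix (Fin 3) (Fin 3) ℝ) (h : Ω ^ 3 = -Ω) (θ : ℝ) :
    NormedSpace.exp (θ • Ω) =
      1 + Real.sin θ • Ω + (1 - Real.cos θ) • Ω ^ 2 := by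
  set G : ℝ → Matrix (Fin 3) (Fin 3) ℝ :=
    fun t => 1 + Real.sin t • Ω + (1 - Real.cos t) • Ω ^ 2 with hG
  set E : ℝ → Matrix (Fin 3) (Fin 3) ℝ := fun t => NormedSpace.exp (t • (-Ω)) with hE
  have hderiv : ∀ t, HasDerivAt (fun t => G t * E t) 0 t := by
    intro t
    have hG' : HasDerivAt G (Real.cos t • Ω + Real.sin t • Ω ^ 2) t := by
      have h1 : HasDerivAt (fun t => Real.sin t • Ω) (Real.cos t • Ω) t :=
        (Real.hasDerivAt_sin t).smul_const Ω
      have h2 : HasDerivAt (fun t => (1 - Real.cos t) • Ω ^ 2) (Real.sin t • Ω ^ 2) t := by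
        exact (by simpa using ((hasDerivAt_const t (1:ℝ)).sub (Real.hasDerivAt_cos t)).smul_const (Ω ^ 2) :)
      exact (by simpa [hG] using ((hasDerivAt_const t (1 : Matrix (Fin 3) (Fin 3) ℝ)).add h1).add h2 :)
    have hE' : HasDerivAt E ((-Ω) * E t) t := hasDerivAt_exp_smul_const' (-Ω) t
    have := hG'.mul hE'
    convert this using 1
    iterate 4 rfl
    have h3 : Ω ^ 2 * Ω = -Ω := by rw [← pow_succ, h]
    have key : G t * Ω = Real.cos t • Ω + Real.sin t • Ω ^ 2 := by
      simp only [hG, add_mul, one_mul, smul_mul_assoc, h3, smul_neg, ← pow_two]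
      module
    have hcancel : G t * (-Ω * E t) = -((Real.cos t • Ω + Real.sin t • Ω ^ 2) * E t) := by
      rw [neg_mul, mul_neg, ← mul_assoc, key]
    rw [hcancel, add_neg_cancel]
  have hconst : ∀ t, G t * E t = 1 := by
    intro t
    have : (fun t => G t * E t) t = (fun t => G t * E t) 0 :=
      is_const_of_deriv_eq_zero (fun x => (hderiv x).differentiableAt)
        (fun x => (hderiv x).deriv) t 0
    simpa [hG, hE, NormedSpace.exp_zero] using this
  have hinv : E θ * NormedSpace.exp (θ • Ω) = 1 := by
    rw [hE]; beta_reduce; erw [← NormedSpace.exp_add_of_commute]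
    · simp
    · exact (Commute.refl Ω).neg_left.smul_left θ |>.smul_right θ
  calc NormedSpace.exp (θ • Ω) = (G θ * E θ) * NormedSpace.exp (θ • Ω) := by
        rw [hconst θ, one_mul]
    _ = G θ * (E θ * NormedSpace.exp (θ • Ω)) := by rw [mul_assoc]
    _ = G θ := by rw [hinv, mul_one]

set_option maxHeartbeats 1600000 in
theorem stmt_12 (r : ℝ) (hr : r ∈ Set.Ioo (0:ℝ) 1) (φ : ℝ) :
    let kx : ℝ := Real.sqrt (1 - r ^ 2)
    let ΩL : Matrix (Fin 3) (Fin 3) ℝ := !![0, r, 0; -r, 0, kx; 0, -kx, 0]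
    let ΩR : Matrix (Fin 3) (Fin 3) ℝ := !![0, r, 0; -r, 0, -kx; 0, kx, 0]
    let uL : Fin 3 → ℝ := ![kx, 0, r]
    let uR : Fin 3 → ℝ := ![-kx, 0, r]
    let RL : ℝ → Matrix (Fin 3) (Fin 3) ℝ := fun θ => NormedSpace.exp (θ • ΩL)
    let RR : ℝ → Matrix (Fin 3) (Fin 3) ℝ := fun θ => NormedSpace.exp (θ • ΩR)
    uR ⬝ᵥ (RL (π + φ) * ΩR).mulVec uL = -(4 * r ^ 2 * (1 - r ^ 2)) * Real.sin φ := by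
  intro kx ΩL ΩR uL uR RL RR
  have hkx : kx ^ 2 = 1 - r ^ 2 := Real.sq_sqrt (by nlinarith [hr.1, hr.2])
  have h3 : ΩL ^ 3 = -ΩL := by
    show ΩL ^ 3 = -ΩL
    ext i j
    fin_cases i <;> fin_cases j <;>
      simp [ΩL, pow_succ, Matrix.mul_apply, Fin.sum_univ_succ] <;>
      first
        | linear_combination (-r) * hkx
        | linear_combination r * hkx
        | linear_combination (-kx) * hkx
        | linear_combination kx * hkx
  have hrod := rodrigues ΩL h3 (π + φ)
  show uR ⬝ᵥ (NormedSpace.exp ((π + φ) • ΩL) * ΩR).mulVec uL = _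
  rw [hrod]
  simp [ΩL, ΩR, uL, uR, Real.sin_add, Real.cos_add, Matrix.mulVec, Matrix.mul_apply,
    dotProduct, Fin.sum_univ_succ, pow_two, Matrix.one_apply, Matrix.cons_val_succ]
  ring_nf
  linear_combination (-(4 * Real.sin φ * r ^ 2)) * hkx
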